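/- arXiv:2008.02337 — 3 statements merged into one kernel-verified Lean document; each statement's English description precedes it below -/
import Mathlib

section
/- For any b ∈ ℝ, σ > 0, and τ > 0, the integral over x ∈ ℝ of (1/√(2πτ)) · Q(b + x/σ) · exp(−x²/(2τ)) dx equals Q(bσ/√(σ² + τ)), where Q(x) = ∫_x^∞ (1/√(2π)) exp(−t²/2) dt is the Gaussian tail function. -/
open MeasureTheory Real

/-- The standard Gaussian tail (complementary CDF) function. -/
noncomputable def gaussQ (x : ℝ) : ℝ :=
  ∫ t in Set.Ioi x, (Real.sqrt (2 * Real.pi))⁻¹ * Real.exp (-(t ^ 2) / 2)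

private lemma integral_Ioi_shift (f : ℝ → ℝ) (a d : ℝ) :
    ∫ t in Set.Ioi (a + d), f t = ∫ u in Set.Ioi a, f (u + d) := by
  rw [← integral_indicator measurableSet_Ioi, ← integral_indicator measurableSet_Ioi,
    ← integral_add_right_eq_self (fun t => (Set.Ioi (a + d)).indicator f t) d]
  congr 1
  ext u
  by_cases h : u ∈ Set.Ioi a
  · rw [Set.indicator_of_mem h,
      Set.indicator_of_mem (by simpa using h : u + d ∈ Set.Ioi (a + d))]
  · rw [Set.indicator_of_notMem h, Set.indicator_of_notMem (by simpa using h)]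

private lemma integrable_std_gauss : Integrable (fun u : ℝ => Real.exp (-(u ^ 2) / 2)) := by
  simpa [neg_div, inv_mul_eq_div] using
    integrable_exp_neg_mul_sq (show (0:ℝ) < 2⁻¹ by norm_num)

private lemma integrable_gauss_var (τ : ℝ) (hτ : 0 < τ) :
    Integrable (fun u : ℝ => Real.exp (-(u ^ 2) / (2 * τ))) := by
  have h : (0:ℝ) < (2 * τ)⁻¹ := by positivity
  refine (integrable_exp_neg_mul_sq h).congr ?_
  filter_upwards with x
  congr 1; ring

theorem gaussQ_smoothing (b σ τ : ℝ) (hσ : 0 < σ) (hτ : 0 < τ) :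
    ∫ x : ℝ, (Real.sqrt (2 * Real.pi * τ))⁻¹ * gaussQ (b + x / σ) *
      Real.exp (-(x ^ 2) / (2 * τ))
    = gaussQ (b * σ / Real.sqrt (σ ^ 2 + τ)) := by
  have hs : (0:ℝ) < σ ^ 2 + τ := by positivity
  have hsq : (0:ℝ) < Real.sqrt (σ ^ 2 + τ) := Real.sqrt_pos.mpr hs
  have hc : (0:ℝ) < σ / Real.sqrt (σ ^ 2 + τ) := div_pos hσ hsq
  set C : ℝ := (Real.sqrt (2 * Real.pi * τ))⁻¹ * (Real.sqrt (2 * Real.pi))⁻¹ with hC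
  -- Step 1: rewrite the integrand as a double integral
  have key : ∀ x : ℝ,
      (Real.sqrt (2 * Real.pi * τ))⁻¹ * gaussQ (b + x / σ) * Real.exp (-(x ^ 2) / (2 * τ))
      = ∫ u in Set.Ioi b,
          C * (Real.exp (-(x ^ 2) / (2 * τ)) * Real.exp (-((u + x / σ) ^ 2) / 2)) := by
    intro x
    have h1 : gaussQ (b + x / σ)
        = ∫ u in Set.Ioi b,
            (Real.sqrt (2 * Real.pi))⁻¹ * Real.exp (-((u + x / σ) ^ 2) / 2) :=
      integral_Ioi_shift (fun t => (Real.sqrt (2 * Real.pi))⁻¹ * Real.exp (-(t ^ 2) / 2)) b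
        (x / σ)
    rw [h1, ← integral_const_mul, ← integral_mul_const]
    congr 1; ext u; rw [hC]; ring
  rw [integral_congr_ae (Filter.Eventually.of_forall key)]
  -- Step 2: integrability and Fubini swap
  have hcont : Continuous (fun p : ℝ × ℝ =>
      C * (Real.exp (-(p.1 ^ 2) / (2 * τ)) * Real.exp (-((p.2 + p.1 / σ) ^ 2) / 2))) := by
    fun_prop
  have hInt : Integrable (fun p : ℝ × ℝ =>
      C * (Real.exp (-(p.1 ^ 2) / (2 * τ)) * Real.exp (-((p.2 + p.1 / σ) ^ 2) / 2)))
      ((volume : Measure ℝ).prod volume) := by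
    rw [integrable_prod_iff hcont.aestronglyMeasurable]
    constructor
    · refine Filter.Eventually.of_forall fun x => ?_
      simpa [mul_assoc] using
        ((integrable_std_gauss.comp_add_right (x / σ)).const_mul
          (C * Real.exp (-(x ^ 2) / (2 * τ))))
    · have heq : (fun x : ℝ => ∫ u : ℝ,
          ‖C * (Real.exp (-(x ^ 2) / (2 * τ)) * Real.exp (-((u + x / σ) ^ 2) / 2))‖)
          = fun x : ℝ => |C| * Real.exp (-(x ^ 2) / (2 * τ)) *
              ∫ u : ℝ, Real.exp (-(u ^ 2) / 2) := by
        funext x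
        have : ∀ u : ℝ,
            ‖C * (Real.exp (-(x ^ 2) / (2 * τ)) * Real.exp (-((u + x / σ) ^ 2) / 2))‖
            = (|C| * Real.exp (-(x ^ 2) / (2 * τ))) * Real.exp (-((u + x / σ) ^ 2) / 2) := by
          intro u
          simp only [Real.norm_eq_abs, abs_mul, abs_of_nonneg (Real.exp_nonneg _)]
          ring
        rw [integral_congr_ae (Filter.Eventually.of_forall this)]
        rw [show (fun u : ℝ => (|C| * Real.exp (-(x ^ 2) / (2 * τ))) * Real.exp (-((u + x / σ) ^ 2) / 2)) = fun u : ℝ => (|C| * Real.exp (-(x ^ 2) / (2 * τ))) * (fun t => Real.exp (-(t ^ 2) / 2)) (u + x / σ) from rfl]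
        rw [integral_const_mul, integral_add_right_eq_self (fun u => Real.exp (-(u ^ 2) / 2)) (x / σ), mul_assoc]
      rw [heq]
      exact ((integrable_gauss_var τ hτ).const_mul _).mul_const _
  have hIntR : Integrable (fun p : ℝ × ℝ =>
      C * (Real.exp (-(p.1 ^ 2) / (2 * τ)) * Real.exp (-((p.2 + p.1 / σ) ^ 2) / 2)))
      ((volume : Measure ℝ).prod (volume.restrict (Set.Ioi b))) := by
    have : (volume : Measure ℝ).prod (volume.restrict (Set.Ioi b))
        = ((volume : Measure ℝ).prod volume).restrict (Set.univ ×ˢ Set.Ioi b) := by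
      rw [← Measure.prod_restrict, Measure.restrict_univ]
    rw [this]
    exact hInt.restrict
  rw [MeasureTheory.integral_integral_swap hIntR]
  -- Step 3: compute the inner integral
  have inner : ∀ u : ℝ,
      (∫ x : ℝ, C * (Real.exp (-(x ^ 2) / (2 * τ)) * Real.exp (-((u + x / σ) ^ 2) / 2)))
      = (σ / Real.sqrt (σ ^ 2 + τ)) *
          ((Real.sqrt (2 * Real.pi))⁻¹ *
            Real.exp (-((u * (σ / Real.sqrt (σ ^ 2 + τ))) ^ 2) / 2)) := by
    intro u
    have expid : ∀ x : ℝ,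
        C * (Real.exp (-(x ^ 2) / (2 * τ)) * Real.exp (-((u + x / σ) ^ 2) / 2))
        = (C * Real.exp (-(σ ^ 2 * u ^ 2) / (2 * (σ ^ 2 + τ)))) *
            Real.exp (-((σ ^ 2 + τ) / (2 * τ * σ ^ 2)) *
              (x + τ * σ * u / (σ ^ 2 + τ)) ^ 2) := by
      intro x
      have h : Real.exp (-(x ^ 2) / (2 * τ)) * Real.exp (-((u + x / σ) ^ 2) / 2)
          = Real.exp (-(σ ^ 2 * u ^ 2) / (2 * (σ ^ 2 + τ))) *
              Real.exp (-((σ ^ 2 + τ) / (2 * τ * σ ^ 2)) *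
                (x + τ * σ * u / (σ ^ 2 + τ)) ^ 2) := by
        rw [← Real.exp_add, ← Real.exp_add]
        congr 1
        have h1 : σ ≠ 0 := hσ.ne'
        have h2 : τ ≠ 0 := hτ.ne'
        have h3 : σ ^ 2 + τ ≠ 0 := hs.ne'
        field_simp
        ring
      rw [mul_assoc C, h]
    rw [integral_congr_ae (Filter.Eventually.of_forall expid), integral_const_mul,
      (integral_add_right_eq_self
        (fun y => Real.exp (-((σ ^ 2 + τ) / (2 * τ * σ ^ 2)) * y ^ 2))
        (τ * σ * u / (σ ^ 2 + τ))).trans (integral_gaussian _)]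
    have hconst : C * Real.sqrt (Real.pi / ((σ ^ 2 + τ) / (2 * τ * σ ^ 2)))
        = (σ / Real.sqrt (σ ^ 2 + τ)) * (Real.sqrt (2 * Real.pi))⁻¹ := by
      have h4 : Real.pi / ((σ ^ 2 + τ) / (2 * τ * σ ^ 2))
          = (2 * Real.pi * τ) * (σ ^ 2 / (σ ^ 2 + τ)) := by
        field_simp
      rw [hC, h4, Real.sqrt_mul (show (0:ℝ) ≤ 2 * Real.pi * τ by positivity)
        (σ ^ 2 / (σ ^ 2 + τ)), Real.sqrt_div (sq_nonneg σ), Real.sqrt_sq hσ.le]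
      have h5 : Real.sqrt (2 * Real.pi * τ) ≠ 0 := by positivity
      have h6 : Real.sqrt (2 * Real.pi) ≠ 0 := by positivity
      have h7 : Real.sqrt (σ ^ 2 + τ) ≠ 0 := hsq.ne'
      field_simp
    have hexp : Real.exp (-(σ ^ 2 * u ^ 2) / (2 * (σ ^ 2 + τ)))
        = Real.exp (-((u * (σ / Real.sqrt (σ ^ 2 + τ))) ^ 2) / 2) := by
      congr 1
      rw [mul_pow, div_pow, Real.sq_sqrt hs.le]
      field_simp
    rw [hexp, mul_right_comm, hconst]
    ring
  rw [integral_congr_ae (Filter.Eventually.of_forall inner)]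
  -- Step 4: change of variables on Ioi
  rw [integral_const_mul, integral_comp_mul_right_Ioi
    (fun t => (Real.sqrt (2 * Real.pi))⁻¹ * Real.exp (-(t ^ 2) / 2)) b hc]
  rw [smul_eq_mul, ← mul_assoc, mul_inv_cancel₀ hc.ne', one_mul, gaussQ, mul_div_assoc]
end

section
/- Let p(x) = (λ/2) exp(λ²N_T/2)·[e^{λx} Q((x + λN_T)/√N_T) + e^{−λx} Q((−x + λN_T)/√N_T)] be the Laplace–Gaussian convolution density with λ, N_T > 0. Then d/dx [log p(x)] = λ·(erfcx(α) − erfcx(β))/(erfcx(α) + erfcx(β)), where α = (x + λN_T)/√(2N_T), β = (−x + λN_T)/√(2N_T), erfcx(t) = e^{t²} erfc(t), and erfc(t) = 2Q(√2·t). -/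
open MeasureTheory Real

noncomputable def gpdf (t : ℝ) : ℝ := (Real.sqrt (2 * Real.pi))⁻¹ * Real.exp (-(t ^ 2) / 2)

lemma gpdf_pos (t : ℝ) : 0 < gpdf t := by
  have : 0 < Real.sqrt (2 * Real.pi) := Real.sqrt_pos.2 (by positivity)
  unfold gpdf; positivity

lemma integrable_gpdf : Integrable gpdf := by
  have h : Integrable (fun t : ℝ => Real.exp (-(1/2 : ℝ) * t ^ 2)) := integrable_exp_neg_mul_sq (by norm_num)
  have := h.const_mul (Real.sqrt (2 * Real.pi))⁻¹
  refine this.congr (Filter.Eventually.of_forall fun t => ?_)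
  unfold gpdf; ring_nf

lemma gaussQ_pos (x : ℝ) : 0 < gaussQ x := by
  have : gaussQ x = ∫ t in Set.Ioi x, gpdf t := rfl
  rw [this]
  apply (setIntegral_pos_iff_support_of_nonneg_ae ?_ ?_).2
  · have hs : (Function.support gpdf) = Set.univ := by
      ext t; simp [(gpdf_pos t).ne']
    rw [hs]
    simpa using (measure_Ioi_pos x).ne'
  · exact Filter.Eventually.of_forall fun t => (gpdf_pos t).le
  · exact integrable_gpdf.integrableOn

lemma continuous_gpdf : Continuous gpdf := by
  unfold gpdf
  exact continuous_const.mul (Real.continuous_exp.comp ((continuous_pow 2).neg.div_const 2))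

lemma hasDerivAt_gaussQ (x : ℝ) : HasDerivAt gaussQ (-gpdf x) x := by
  have hint : ∀ y : ℝ, gaussQ y = (∫ t, gpdf t) - ∫ t in Set.Iic y, gpdf t := by
    intro y
    have := intervalIntegral.integral_Iic_add_Ioi (integrable_gpdf.integrableOn) (integrable_gpdf.integrableOn) (f := gpdf) (b := y)
    unfold gaussQ; unfold gpdf at this ⊢; linarith
  have h2 : ∀ y : ℝ, gaussQ y = gaussQ 0 - ∫ t in (0:ℝ)..y, gpdf t := by
    intro y
    rw [hint y, hint 0, ← intervalIntegral.integral_Iic_sub_Iic integrable_gpdf.integrableOn integrable_gpdf.integrableOn]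
    ring
  have hd : HasDerivAt (fun y => ∫ t in (0:ℝ)..y, gpdf t) (gpdf x) x := by
    apply intervalIntegral.integral_hasDerivAt_right
      (integrable_gpdf.intervalIntegrable)
      (continuous_gpdf.stronglyMeasurableAtFilter _ _)
    exact continuous_gpdf.continuousAt
  have := (hasDerivAt_const x (gaussQ 0)).sub hd
  have heq : (fun y => gaussQ 0 - ∫ t in (0:ℝ)..y, gpdf t) = gaussQ := by
    funext y; rw [h2 y]
  rw [show ((fun _ => gaussQ 0) - fun y => ∫ t in (0:ℝ)..y, gpdf t) = gaussQ from heq] at this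
  simpa using this

/-- Complementary error function `erfc(t) = 2 Q(√2 t)`. -/
noncomputable def erfc (t : ℝ) : ℝ := 2 * gaussQ (Real.sqrt 2 * t)

/-- Scaled complementary error function `erfcx(t) = e^{t²} erfc(t)`. -/
noncomputable def erfcx (t : ℝ) : ℝ := Real.exp (t ^ 2) * erfc t

/-- The Laplace–Gaussian convolution density (closed form). -/
noncomputable def laplaceGaussDensity (lam NT x : ℝ) : ℝ :=
  lam / 2 * Real.exp (lam ^ 2 * NT / 2) *
    (Real.exp (lam * x) * gaussQ ((x + lam * NT) / Real.sqrt NT)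
      + Real.exp (-lam * x) * gaussQ ((-x + lam * NT) / Real.sqrt NT))

/-- Score function of the Laplace–Gaussian convolution density in numerically stable form:
`d/dx log p(x) = λ (erfcx α − erfcx β)/(erfcx α + erfcx β)`. -/
theorem deriv_log_laplaceGaussDensity (lam NT : ℝ) (hlam : 0 < lam) (hNT : 0 < NT) (x : ℝ) :
    HasDerivAt (fun x => Real.log (laplaceGaussDensity lam NT x))
      (lam * (erfcx ((x + lam * NT) / Real.sqrt (2 * NT))
              - erfcx ((-x + lam * NT) / Real.sqrt (2 * NT)))
        / (erfcx ((x + lam * NT) / Real.sqrt (2 * NT))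
            + erfcx ((-x + lam * NT) / Real.sqrt (2 * NT)))) x := by
  have hsN : (0:ℝ) < Real.sqrt NT := Real.sqrt_pos.2 hNT
  have hsN2 : (Real.sqrt NT) ^ 2 = NT := Real.sq_sqrt hNT.le
  have hs2N : Real.sqrt (2 * NT) = Real.sqrt 2 * Real.sqrt NT := Real.sqrt_mul (by norm_num) NT
  set sN := Real.sqrt NT with hsNdef
  set a := (x + lam * NT) / sN with ha
  set b := (-x + lam * NT) / sN with hb
  set α := (x + lam * NT) / Real.sqrt (2 * NT) with hα
  set β := (-x + lam * NT) / Real.sqrt (2 * NT) with hβ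
  set C := lam / 2 * Real.exp (lam ^ 2 * NT / 2) with hC
  have hCpos : 0 < C := by unfold C; positivity
  -- derivatives of the two summands
  have h1 : HasDerivAt (fun y : ℝ => Real.exp (lam * y)) (lam * Real.exp (lam * x)) x := by
    simpa [mul_comm] using ((hasDerivAt_id x).const_mul lam).exp
  have h2 : HasDerivAt (fun y : ℝ => Real.exp (-lam * y)) (-lam * Real.exp (-lam * x)) x := by
    simpa [mul_comm] using ((hasDerivAt_id x).const_mul (-lam)).exp
  have hA : HasDerivAt (fun y : ℝ => (y + lam * NT) / sN) (1 / sN) x := by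
    simpa using ((hasDerivAt_id x).add_const (lam * NT)).div_const sN
  have hB : HasDerivAt (fun y : ℝ => (-y + lam * NT) / sN) (-1 / sN) x := by
    simpa using (((hasDerivAt_id x).neg).add_const (lam * NT)).div_const sN
  have hQa : HasDerivAt (fun y : ℝ => gaussQ ((y + lam * NT) / sN)) (-gpdf a * (1 / sN)) x :=
    by have h := (hasDerivAt_gaussQ ((x + lam * NT) / sN)).comp x hA; exact h
  have hQb : HasDerivAt (fun y : ℝ => gaussQ ((-y + lam * NT) / sN)) (-gpdf b * (-1 / sN)) x :=
    by have h := (hasDerivAt_gaussQ ((-x + lam * NT) / sN)).comp x hB; exact h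
  have hf1 := h1.mul hQa
  have hf2 := h2.mul hQb
  have hsum := (hf1.add hf2).const_mul C
  -- positivity of the density
  set E1 := Real.exp (lam * x) * gaussQ a with hE1
  set E2 := Real.exp (-lam * x) * gaussQ b with hE2
  have hE1pos : 0 < E1 := mul_pos (Real.exp_pos _) (gaussQ_pos a)
  have hE2pos : 0 < E2 := mul_pos (Real.exp_pos _) (gaussQ_pos b)
  have hpx : laplaceGaussDensity lam NT x = C * (E1 + E2) := rfl
  have hpne : laplaceGaussDensity lam NT x ≠ 0 := by
    rw [hpx]; positivity
  have hp : HasDerivAt (fun y => laplaceGaussDensity lam NT y)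
      (C * ((lam * Real.exp (lam * x) * gaussQ a + Real.exp (lam * x) * (-gpdf a * (1/sN)))
        + (-lam * Real.exp (-lam * x) * gaussQ b + Real.exp (-lam * x) * (-gpdf b * (-1/sN))))) x := by
    exact hsum
  -- the cancellation identity
  have hcancel : Real.exp (lam * x) * gpdf a = Real.exp (-lam * x) * gpdf b := by
    unfold gpdf
    rw [show Real.exp (lam*x) * ((Real.sqrt (2*Real.pi))⁻¹ * Real.exp (-(a^2)/2))
        = (Real.sqrt (2*Real.pi))⁻¹ * (Real.exp (lam*x) * Real.exp (-(a^2)/2)) by ring,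
      show Real.exp (-lam*x) * ((Real.sqrt (2*Real.pi))⁻¹ * Real.exp (-(b^2)/2))
        = (Real.sqrt (2*Real.pi))⁻¹ * (Real.exp (-lam*x) * Real.exp (-(b^2)/2)) by ring,
      ← Real.exp_add, ← Real.exp_add]
    congr 1
    rw [ha, hb, div_pow, div_pow, hsN2]
    field_simp
    ring
  have hzero : Real.exp (lam * x) * (-gpdf a * (1/sN)) + Real.exp (-lam * x) * (-gpdf b * (-1/sN)) = 0 := by
    have h : Real.exp (lam * x) * (-gpdf a * (1/sN)) + Real.exp (-lam * x) * (-gpdf b * (-1/sN))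
        = (Real.exp (-lam * x) * gpdf b - Real.exp (lam * x) * gpdf a) / sN := by ring
    rw [h, hcancel]; simp
  have hp' : HasDerivAt (fun y => laplaceGaussDensity lam NT y) (C * lam * (E1 - E2)) x := by
    convert hp using 1
    rw [hE1, hE2]
    linear_combination (C / sN) * hcancel
  have hlog := hp'.log hpne
  -- rewrite erfcx in terms of E1, E2
  have hsqa : Real.sqrt 2 * α = a := by
    rw [hα, hs2N, ha]
    field_simp [Real.sqrt_ne_zero'.2 (show (0:ℝ) < 2 by norm_num), hsN.ne']
  have hsqb : Real.sqrt 2 * β = b := by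
    rw [hβ, hs2N, hb]
    field_simp [Real.sqrt_ne_zero'.2 (show (0:ℝ) < 2 by norm_num), hsN.ne']
  set X := erfcx α with hX
  set Y := erfcx β with hY
  have hXv : X = Real.exp (α ^ 2) * (2 * gaussQ a) := by rw [hX]; unfold erfcx erfc; rw [hsqa]
  have hYv : Y = Real.exp (β ^ 2) * (2 * gaussQ b) := by rw [hY]; unfold erfcx erfc; rw [hsqb]
  have hXpos : 0 < X := by
    rw [hXv]; exact mul_pos (Real.exp_pos _) (mul_pos two_pos (gaussQ_pos a))
  have hYpos : 0 < Y := by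
    rw [hYv]; exact mul_pos (Real.exp_pos _) (mul_pos two_pos (gaussQ_pos b))
  set k := Real.exp (lam * x - α ^ 2) with hk
  have hkpos : 0 < k := Real.exp_pos _
  have hE1X : E1 = k * X / 2 := by
    rw [hE1, hXv, hk]
    rw [show Real.exp (lam*x - α^2) * (Real.exp (α^2) * (2*gaussQ a)) / 2
        = (Real.exp (lam*x - α^2) * Real.exp (α^2)) * gaussQ a by ring, ← Real.exp_add]
    ring_nf
  have hkk : k = Real.exp (-lam * x - β ^ 2) := by
    rw [hk]
    congr 1
    have h2NT : Real.sqrt (2*NT) ^ 2 = 2 * NT := Real.sq_sqrt (by positivity)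
    rw [hα, hβ, div_pow, div_pow, h2NT]
    field_simp
    ring
  have hE2Y : E2 = k * Y / 2 := by
    rw [hE2, hYv, hkk]
    rw [show Real.exp (-lam*x - β^2) * (Real.exp (β^2) * (2*gaussQ b)) / 2
        = (Real.exp (-lam*x - β^2) * Real.exp (β^2)) * gaussQ b by ring, ← Real.exp_add]
    ring_nf
  convert hlog using 1
  rw [hpx, hE1X, hE2Y]
  have hXY : 0 < X + Y := by positivity
  have hCk : (0:ℝ) < C * k / 2 := by positivity
  rw [show C * lam * (k * X / 2 - k * Y / 2) = (C * k / 2) * (lam * (X - Y)) by ring,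
    show C * (k * X / 2 + k * Y / 2) = (C * k / 2) * (X + Y) by ring,
    mul_div_mul_left _ _ hCk.ne']
end

section
/- Let X, Z be independent with Z ∼ N(0,1), and for σ₁ < σ₂ let F₂ be any measurable estimator. Define the Rao–Blackwellized estimator F̃₁(y) = E_{Z̃}[F₂(y + √(σ₂² − σ₁²)·Z̃)] where Z̃ ∼ N(0,1) is independent of everything else. Then E[|F̃₁(X + σ₁Z) − X|²] ≤ E[|F₂(X + σ₂Z') − X|²], where Z' ∼ N(0,1) is independent of X. -/
open MeasureTheory ProbabilityTheory Real ENNReal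


lemma rot_lintegral (a b : ℝ) (hab : a ^ 2 + b ^ 2 = 1) (φ : ℝ × ℝ → ℝ≥0∞)
    (hφ : Measurable φ) :
    ∫⁻ p, φ p ∂(volume : Measure (ℝ × ℝ))
      = ∫⁻ p, φ (a * p.1 + b * p.2, b * p.1 - a * p.2) ∂(volume : Measure (ℝ × ℝ)) := by
  set f : ℝ × ℝ →ₗ[ℝ] ℝ × ℝ :=
    Matrix.toLin (Module.Basis.finTwoProd ℝ) (Module.Basis.finTwoProd ℝ) !![a, b; b, -a] with hf
  have hdet : LinearMap.det f = -1 := by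
    rw [hf, LinearMap.det_toLin]
    simp [Matrix.det_fin_two_of]
    nlinarith
  have hfc : Continuous f := f.continuous_of_finiteDimensional
  have hmap : Measure.map f (volume : Measure (ℝ × ℝ)) = volume := by
    rw [Measure.map_linearMap_addHaar_eq_smul_addHaar _ (by rw [hdet]; norm_num)]
    rw [hdet]; norm_num
  have happ : ∀ p : ℝ × ℝ, f p = (a * p.1 + b * p.2, b * p.1 - a * p.2) := by
    intro p
    rw [hf, Matrix.toLin_finTwoProd_apply]; ring_nf
  conv_lhs => rw [← hmap]
  rw [lintegral_map hφ hfc.measurable]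
  simp_rw [happ]

lemma pdf_mul_rot {x y u v : ℝ} (h : x ^ 2 + y ^ 2 = u ^ 2 + v ^ 2) :
    gaussianPDFReal 0 1 x * gaussianPDFReal 0 1 y
      = gaussianPDFReal 0 1 u * gaussianPDFReal 0 1 v := by
  simp only [gaussianPDFReal, sub_zero, NNReal.coe_one, mul_one]
  rw [mul_mul_mul_comm, ← Real.exp_add, mul_mul_mul_comm, ← Real.exp_add]
  congr 1
  field_simp
  congr 1
  linarith

lemma conv_lintegral (a b : ℝ) (ha : 0 < a) (hb : 0 < b) (h : ℝ → ℝ≥0∞)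
    (hh : Measurable h) :
    ∫⁻ p, h (a * p.1 + b * p.2) ∂((gaussianReal 0 1).prod (gaussianReal 0 1))
      = ∫⁻ u, h (Real.sqrt (a ^ 2 + b ^ 2) * u) ∂(gaussianReal 0 1) := by
  set c := Real.sqrt (a ^ 2 + b ^ 2) with hcdef
  have hc : 0 < c := Real.sqrt_pos.2 (by positivity)
  have hc2 : c ^ 2 = a ^ 2 + b ^ 2 := Real.sq_sqrt (by positivity)
  set g := gaussianPDF 0 1 with hgdef
  have hγ : gaussianReal 0 1 = (volume : Measure ℝ).withDensity g :=
    gaussianReal_of_var_ne_zero 0 one_ne_zero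
  have hgm : Measurable g := measurable_gaussianPDF 0 1
  have hint : ∫⁻ x, g x = 1 := lintegral_gaussianPDF_eq_one 0 one_ne_zero
  have hmes1 : Measurable fun z : ℝ => ∫⁻ w, g w * h (a * z + b * w) ∂volume := by
    apply Measurable.lintegral_prod_right (f := fun z w => g w * h (a * z + b * w))
    fun_prop
  calc ∫⁻ p, h (a * p.1 + b * p.2) ∂((gaussianReal 0 1).prod (gaussianReal 0 1))
      = ∫⁻ z, ∫⁻ w, h (a * z + b * w) ∂(gaussianReal 0 1) ∂(gaussianReal 0 1) := by
        rw [lintegral_prod _ (by fun_prop)]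
    _ = ∫⁻ z, g z * ∫⁻ w, g w * h (a * z + b * w) ∂volume ∂volume := by
        have hmes0 : Measurable fun z : ℝ =>
            ∫⁻ w, h (a * z + b * w) ∂((volume : Measure ℝ).withDensity g) := by
          apply Measurable.lintegral_prod_right (f := fun z w => h (a * z + b * w))
          fun_prop
        rw [hγ, lintegral_withDensity_eq_lintegral_mul _ hgm hmes0]
        congr 1 with z
        simp only [Pi.mul_apply]
        congr 1
        rw [lintegral_withDensity_eq_lintegral_mul _ hgm (by fun_prop)]
        simp only [Pi.mul_apply]
    _ = ∫⁻ p : ℝ × ℝ, g p.1 * (g p.2 * h (a * p.1 + b * p.2)) ∂volume := by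
        rw [Measure.volume_eq_prod, lintegral_prod _ (by fun_prop)]
        congr 1 with z
        dsimp only
        exact (lintegral_const_mul _ (by fun_prop)).symm
    _ = ∫⁻ p : ℝ × ℝ, g p.1 * (g p.2 * h (c * p.1)) ∂volume := by
        rw [rot_lintegral (a / c) (b / c)
          (by field_simp; linarith [hc2]) _ (by fun_prop)]
        congr 1 with p
        have h3 : a * (a / c * p.1 + b / c * p.2) + b * (b / c * p.1 - a / c * p.2)
            = c * p.1 := by
          rw [show a * (a / c * p.1 + b / c * p.2) + b * (b / c * p.1 - a / c * p.2)
            = ((a ^ 2 + b ^ 2) * p.1) / c from by ring, ← hc2]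
          field_simp
        rw [h3]
        have h4 : (a / c * p.1 + b / c * p.2) ^ 2 + (b / c * p.1 - a / c * p.2) ^ 2
            = p.1 ^ 2 + p.2 ^ 2 := by
          rw [show (a / c * p.1 + b / c * p.2) ^ 2 + (b / c * p.1 - a / c * p.2) ^ 2
            = (a ^ 2 + b ^ 2) / c ^ 2 * (p.1 ^ 2 + p.2 ^ 2) from by ring, ← hc2,
            div_self (by positivity), one_mul]
        rw [← mul_assoc, ← mul_assoc, hgdef, gaussianPDF_def,
          ← ENNReal.ofReal_mul (gaussianPDFReal_nonneg _ _ _),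
          ← ENNReal.ofReal_mul (gaussianPDFReal_nonneg _ _ _), pdf_mul_rot h4]
    _ = ∫⁻ u, g u * h (c * u) ∂volume := by
        rw [Measure.volume_eq_prod, lintegral_prod _ (by fun_prop)]
        congr 1 with z
        dsimp only
        rw [lintegral_const_mul _ (by fun_prop), lintegral_mul_const _ hgm, hint, one_mul]
    _ = ∫⁻ u, h (c * u) ∂(gaussianReal 0 1) := by
        rw [hγ, lintegral_withDensity_eq_lintegral_mul _ hgm (by fun_prop)]
        simp only [Pi.mul_apply]

lemma conv_map (a b : ℝ) (ha : 0 < a) (hb : 0 < b) :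
    ((gaussianReal 0 1).prod (gaussianReal 0 1)).map (fun p => a * p.1 + b * p.2)
      = (gaussianReal 0 1).map (fun u => Real.sqrt (a ^ 2 + b ^ 2) * u) := by
  have hT : Measurable fun p : ℝ × ℝ => a * p.1 + b * p.2 := by fun_prop
  have hS : Measurable fun u : ℝ => Real.sqrt (a ^ 2 + b ^ 2) * u := by fun_prop
  ext A hA
  rw [Measure.map_apply hT hA, Measure.map_apply hS hA]
  have key := conv_lintegral a b ha hb (A.indicator 1) (measurable_one.indicator hA)
  have e1 : ∀ p : ℝ × ℝ, A.indicator (1 : ℝ → ℝ≥0∞) (a * p.1 + b * p.2)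
      = ((fun p : ℝ × ℝ => a * p.1 + b * p.2) ⁻¹' A).indicator 1 p := by
    intro p
    by_cases hp : a * p.1 + b * p.2 ∈ A <;> simp [Set.indicator_apply, hp]
  have e2 : ∀ u : ℝ, A.indicator (1 : ℝ → ℝ≥0∞) (Real.sqrt (a ^ 2 + b ^ 2) * u)
      = ((fun u : ℝ => Real.sqrt (a ^ 2 + b ^ 2) * u) ⁻¹' A).indicator 1 u := by
    intro u
    by_cases hu : Real.sqrt (a ^ 2 + b ^ 2) * u ∈ A <;> simp [Set.indicator_apply, hu]
  simp_rw [e1, e2] at key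
  rwa [lintegral_indicator_one (hT hA), lintegral_indicator_one (hS hA)] at key

/-- Rao–Blackwellization across noise levels: for `σ₁ < σ₂` and any measurable estimator
`F₂`, the estimator `F̃₁(y) = E_{Z̃}[F₂(y + √(σ₂² − σ₁²) Z̃)]` applied at noise level `σ₁`
has mean-squared error at most that of `F₂` at noise level `σ₂`. -/
theorem rao_blackwell_noise_levels {Ω : Type*} [MeasurableSpace Ω] (μ : Measure Ω)
    [IsProbabilityMeasure μ] (X Z Z' : Ω → ℝ)
    (hX : Measurable X) (hZ : Measurable Z) (hZ' : Measurable Z')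
    (hZdist : μ.map Z = gaussianReal 0 1) (hZ'dist : μ.map Z' = gaussianReal 0 1)
    (hindepZ : IndepFun X Z μ) (hindepZ' : IndepFun X Z' μ)
    (σ₁ σ₂ : ℝ) (hσ₁ : 0 < σ₁) (hσ₁₂ : σ₁ < σ₂)
    (F₂ : ℝ → ℝ) (hF₂ : Measurable F₂)
    (hF₂int : Integrable (fun ω => (F₂ (X ω + σ₂ * Z' ω)) ^ 2) μ)
    (hX2 : Integrable (fun ω => (X ω) ^ 2) μ) :
    ∫ ω, ((∫ z, F₂ (X ω + σ₁ * Z ω + Real.sqrt (σ₂ ^ 2 - σ₁ ^ 2) * z)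
          ∂(gaussianReal 0 1)) - X ω) ^ 2 ∂μ
      ≤ ∫ ω, (F₂ (X ω + σ₂ * Z' ω) - X ω) ^ 2 ∂μ := by
  have hσ₂ : 0 < σ₂ := hσ₁.trans hσ₁₂
  set s : ℝ := Real.sqrt (σ₂ ^ 2 - σ₁ ^ 2) with hsdef
  have hs : 0 < s := Real.sqrt_pos.2 (by nlinarith)
  set γ : Measure ℝ := gaussianReal 0 1 with hγdef
  set ν : Measure ℝ := μ.map X with hνdef
  have hνprob : IsProbabilityMeasure ν := Measure.isProbabilityMeasure_map hX.aemeasurable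
  -- convolution identity
  have hcσ : Real.sqrt (σ₁ ^ 2 + s ^ 2) = σ₂ := by
    rw [hsdef, Real.sq_sqrt (by nlinarith : (0:ℝ) ≤ σ₂ ^ 2 - σ₁ ^ 2)]
    rw [show σ₁ ^ 2 + (σ₂ ^ 2 - σ₁ ^ 2) = σ₂ ^ 2 from by ring]
    exact Real.sqrt_sq hσ₂.le
  have hconv : (γ.prod γ).map (fun p => σ₁ * p.1 + s * p.2)
      = γ.map (fun u => σ₂ * u) := by
    have h := conv_map σ₁ s hσ₁ hs
    rwa [hcσ] at h
  -- pair distributions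
  have hpairZ : μ.map (fun ω => (X ω, Z ω)) = ν.prod γ := by
    rw [← hZdist]
    exact (indepFun_iff_map_prod_eq_prod_map_map hX.aemeasurable hZ.aemeasurable).mp hindepZ
  have hpairZ' : μ.map (fun ω => (X ω, Z' ω)) = ν.prod γ := by
    rw [← hZ'dist]
    exact (indepFun_iff_map_prod_eq_prod_map_map hX.aemeasurable hZ'.aemeasurable).mp hindepZ'
  -- key functions
  have hφm : Measurable fun p : ℝ × ℝ => (F₂ (p.1 + p.2) - p.1) ^ 2 := by fun_prop
  have hT' : Measurable fun v : ℝ × ℝ => σ₁ * v.1 + s * v.2 := by fun_prop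
  have hS' : Measurable fun u : ℝ => σ₂ * u := by fun_prop
  have hproj2 : Measurable fun p : ℝ × ℝ => (p.1, σ₂ * p.2) := by fun_prop
  have hproj1 : Measurable fun q : (ℝ × ℝ) × ℝ => (q.1.1, σ₁ * q.1.2 + s * q.2) := by
    fun_prop
  have hrm : Measurable fun p : ℝ × ℝ => (F₂ (p.1 + σ₂ * p.2) - p.1) ^ 2 := by fun_prop
  have hfm : Measurable fun q : (ℝ × ℝ) × ℝ =>
      (F₂ (q.1.1 + σ₁ * q.1.2 + s * q.2) - q.1.1) ^ 2 := by fun_prop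
  -- map equality (claim A)
  have hA : ((ν.prod γ).prod γ).map (fun q : (ℝ × ℝ) × ℝ => (q.1.1, σ₁ * q.1.2 + s * q.2))
      = (ν.prod γ).map (fun p : ℝ × ℝ => (p.1, σ₂ * p.2)) := by
    have hcomp : (fun q : (ℝ × ℝ) × ℝ => (q.1.1, σ₁ * q.1.2 + s * q.2))
        = (Prod.map (id : ℝ → ℝ) (fun v : ℝ × ℝ => σ₁ * v.1 + s * v.2))
          ∘ (MeasurableEquiv.prodAssoc : (ℝ × ℝ) × ℝ ≃ᵐ ℝ × ℝ × ℝ) := rfl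
    have hcomp2 : (fun p : ℝ × ℝ => (p.1, σ₂ * p.2))
        = Prod.map (id : ℝ → ℝ) (fun u : ℝ => σ₂ * u) := rfl
    rw [hcomp, hcomp2, ← Measure.map_map (measurable_id.prodMap hT')
        MeasurableEquiv.prodAssoc.measurable,
      Measure.prodAssoc_prod, ← Measure.map_prod_map _ _ measurable_id hT',
      ← Measure.map_prod_map _ _ measurable_id hS', Measure.map_id, hconv]
  -- integrability over μ
  have hμint : Integrable (fun ω => (F₂ (X ω + σ₂ * Z' ω) - X ω) ^ 2) μ := by
    refine Integrable.mono' ((hF₂int.const_mul 2).add (hX2.const_mul 2)) ?_ ?_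
    · exact (((hF₂.comp (by fun_prop)).sub hX).pow_const 2).aestronglyMeasurable
    · filter_upwards with ω
      rw [Real.norm_eq_abs, abs_of_nonneg (sq_nonneg _)]
      simp only [Pi.add_apply]
      nlinarith [sq_nonneg (F₂ (X ω + σ₂ * Z' ω) + X ω)]
  -- integrability of r on ν.prod γ
  have hrint : Integrable (fun p : ℝ × ℝ => (F₂ (p.1 + σ₂ * p.2) - p.1) ^ 2) (ν.prod γ) := by
    rw [← hpairZ',
      integrable_map_measure hrm.aestronglyMeasurable (hX.prodMk hZ').aemeasurable]
    exact hμint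
  -- integrability of f on (ν.prod γ).prod γ
  have hφint : Integrable (fun p : ℝ × ℝ => (F₂ (p.1 + p.2) - p.1) ^ 2)
      ((ν.prod γ).map (fun p : ℝ × ℝ => (p.1, σ₂ * p.2))) := by
    rw [integrable_map_measure hφm.aestronglyMeasurable (by fun_prop)]
    exact hrint
  have hfint : Integrable (fun q : (ℝ × ℝ) × ℝ =>
      (F₂ (q.1.1 + σ₁ * q.1.2 + s * q.2) - q.1.1) ^ 2) ((ν.prod γ).prod γ) := by
    rw [← hA, integrable_map_measure hφm.aestronglyMeasurable
      hproj1.aemeasurable] at hφint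
    have h6 : Integrable (fun x : (ℝ × ℝ) × ℝ =>
        (F₂ (x.1.1 + (σ₁ * x.1.2 + s * x.2)) - x.1.1) ^ 2) ((ν.prod γ).prod γ) := by
      simpa [Function.comp_def] using hφint
    refine h6.congr ?_
    filter_upwards with q
    ring_nf
  -- RHS rewriting
  have hRHS1 : ∫ ω, (F₂ (X ω + σ₂ * Z' ω) - X ω) ^ 2 ∂μ
      = ∫ p, (F₂ (p.1 + σ₂ * p.2) - p.1) ^ 2 ∂(ν.prod γ) := by
    rw [← hpairZ',
      integral_map (hX.prodMk hZ').aemeasurable hrm.aestronglyMeasurable]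
  have hRHS2 : ∫ p, (F₂ (p.1 + σ₂ * p.2) - p.1) ^ 2 ∂(ν.prod γ)
      = ∫ q, (F₂ (q.1.1 + σ₁ * q.1.2 + s * q.2) - q.1.1) ^ 2 ∂((ν.prod γ).prod γ) := by
    rw [show (∫ p, (F₂ (p.1 + σ₂ * p.2) - p.1) ^ 2 ∂(ν.prod γ))
        = ∫ p, (F₂ (p.1 + p.2) - p.1) ^ 2
            ∂((ν.prod γ).map (fun p : ℝ × ℝ => (p.1, σ₂ * p.2))) from
      (integral_map hproj2.aemeasurable hφm.aestronglyMeasurable).symm, ← hA,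
      integral_map hproj1.aemeasurable hφm.aestronglyMeasurable]
    congr 1 with q
    simp [add_assoc]
  -- LHS rewriting
  have hSM : StronglyMeasurable fun p : ℝ × ℝ => ∫ w, F₂ (p.1 + σ₁ * p.2 + s * w) ∂γ := by
    apply StronglyMeasurable.integral_prod_right'
      (f := fun q : (ℝ × ℝ) × ℝ => F₂ (q.1.1 + σ₁ * q.1.2 + s * q.2))
    exact (hF₂.comp (by fun_prop)).stronglyMeasurable
  have hLm : Measurable fun p : ℝ × ℝ =>
      ((∫ w, F₂ (p.1 + σ₁ * p.2 + s * w) ∂γ) - p.1) ^ 2 :=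
    (hSM.measurable.sub measurable_fst).pow_const 2
  have hLHS1 : ∫ ω, ((∫ z, F₂ (X ω + σ₁ * Z ω + s * z) ∂γ) - X ω) ^ 2 ∂μ
      = ∫ p, ((∫ w, F₂ (p.1 + σ₁ * p.2 + s * w) ∂γ) - p.1) ^ 2 ∂(ν.prod γ) := by
    rw [← hpairZ,
      integral_map (hX.prodMk hZ).aemeasurable hLm.aestronglyMeasurable]
  -- Jensen a.e.
  have hH : Integrable (fun p : ℝ × ℝ =>
      ∫ w, (F₂ (p.1 + σ₁ * p.2 + s * w) - p.1) ^ 2 ∂γ) (ν.prod γ) :=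
    hfint.integral_prod_left
  have hae : ∀ᵐ p ∂(ν.prod γ),
      ((∫ w, F₂ (p.1 + σ₁ * p.2 + s * w) ∂γ) - p.1) ^ 2
        ≤ ∫ w, (F₂ (p.1 + σ₁ * p.2 + s * w) - p.1) ^ 2 ∂γ := by
    filter_upwards [hfint.prod_right_ae] with p hp
    have hmw : Measurable fun w : ℝ => F₂ (p.1 + σ₁ * p.2 + s * w) - p.1 := by fun_prop
    have hm2 : MemLp (fun w => F₂ (p.1 + σ₁ * p.2 + s * w) - p.1) 2 γ := by
      rw [memLp_two_iff_integrable_sq hmw.aestronglyMeasurable]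
      exact hp
    have hint1 : Integrable (fun w => F₂ (p.1 + σ₁ * p.2 + s * w) - p.1) γ :=
      hm2.integrable one_le_two
    have hintF : Integrable (fun w => F₂ (p.1 + σ₁ * p.2 + s * w)) γ := by
      refine (hint1.add (integrable_const p.1)).congr ?_
      filter_upwards with w
      simp [Pi.add_apply]
    have hvar := variance_nonneg (fun w => F₂ (p.1 + σ₁ * p.2 + s * w) - p.1) γ
    rw [variance_eq_sub hm2] at hvar
    have hmean : (∫ w, F₂ (p.1 + σ₁ * p.2 + s * w) ∂γ) - p.1
        = ∫ w, (F₂ (p.1 + σ₁ * p.2 + s * w) - p.1) ∂γ := by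
      rw [integral_sub hintF (integrable_const p.1), integral_const]
      simp
    rw [hmean]
    simpa using hvar
  -- conclusion
  calc ∫ ω, ((∫ z, F₂ (X ω + σ₁ * Z ω + s * z) ∂γ) - X ω) ^ 2 ∂μ
      = ∫ p, ((∫ w, F₂ (p.1 + σ₁ * p.2 + s * w) ∂γ) - p.1) ^ 2 ∂(ν.prod γ) := hLHS1
    _ ≤ ∫ p, (∫ w, (F₂ (p.1 + σ₁ * p.2 + s * w) - p.1) ^ 2 ∂γ) ∂(ν.prod γ) :=
        integral_mono_of_nonneg (Filter.Eventually.of_forall fun p => sq_nonneg _) hH hae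
    _ = ∫ q, (F₂ (q.1.1 + σ₁ * q.1.2 + s * q.2) - q.1.1) ^ 2 ∂((ν.prod γ).prod γ) :=
        (integral_prod _ hfint).symm
    _ = ∫ p, (F₂ (p.1 + σ₂ * p.2) - p.1) ^ 2 ∂(ν.prod γ) := hRHS2.symm
    _ = ∫ ω, (F₂ (X ω + σ₂ * Z' ω) - X ω) ^ 2 ∂μ := hRHS1.symm
end
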